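/- Let A be a bounded subset of ℝ^N satisfying |A_t| = t^{N-D}(M + O(t^α)) as t → 0⁺, with α > 0, M ∈ (0,∞), D ≥ 0. Then the tube zeta function ζ̃_A(s) := ∫_0^δ t^{s-N-1}|A_t| dt (for fixed δ > 0) admits a meromorphic continuation to the half-plane {Re(s) > D − α}, whose only pole there is the simple pole s = D with residue res(ζ̃_A, D) = M. -/

import Mathlib

open MeasureTheory Metric Filter Set Topology

/-- The tube zeta function `ζ̃_A(s) = ∫_0^δ t^{s-N-1} |A_t| dt` of `A ⊆ ℝ^N`. -/
noncomputable def tubeZeta (N : ℕ) (A : Set (EuclideanSpace ℝ (Fin N))) (δ : ℝ)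
    (s : ℂ) : ℂ :=
  ∫ t in Set.Ioo (0 : ℝ) δ,
    (t : ℂ) ^ (s - (N : ℂ) - 1) * ((volume (Metric.thickening t A)).toReal : ℂ)

/-- If `|A_t| = t^{N-D}(M + O(t^α))` as `t → 0⁺`, then the tube zeta function admits a
meromorphic continuation to `{Re s > D - α}` whose only pole there is the simple pole
`s = D`, with residue `M`. (Formulated via the holomorphic function `(s - D)·ζ̃_A(s)`.) -/
theorem stmt_7 (N : ℕ) (A : Set (EuclideanSpace ℝ (Fin N))) (hA : A.Nonempty)
    (hAb : Bornology.IsBounded A) (δ : ℝ) (hδ : 0 < δ)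
    (α M D : ℝ) (hα : 0 < α) (hM : 0 < M) (hD : 0 ≤ D)
    (hO : ∃ C ε : ℝ, 0 < C ∧ 0 < ε ∧ ∀ t : ℝ, 0 < t → t < ε →
      |(volume (Metric.thickening t A)).toReal - M * t ^ ((N : ℝ) - D)|
        ≤ C * t ^ ((N : ℝ) - D + α)) :
    ∃ F : ℂ → ℂ,
      DifferentiableOn ℂ F {s : ℂ | D - α < s.re} ∧
      (∀ s : ℂ, D < s.re → F s = (s - (D : ℂ)) * tubeZeta N A δ s) ∧
      F (D : ℂ) = (M : ℂ) := by
  obtain ⟨C, ε, hC, hε, hbound⟩ := hO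
  set V : ℝ → ℝ := fun t => (volume (Metric.thickening t A)).toReal with hVdef
  have hVnn : ∀ t, 0 ≤ V t := fun t => ENNReal.toReal_nonneg
  have hVmono : Monotone V := by
    intro a b hab
    exact ENNReal.toReal_mono (hAb.thickening.measure_lt_top).ne
      (measure_mono (Metric.thickening_mono hab A))
  have hVmeas : Measurable V := hVmono.measurable
  set ε₀ : ℝ := min ε δ with hε₀def
  have hε₀ : 0 < ε₀ := lt_min hε hδ
  have hε₀δ : ε₀ ≤ δ := min_le_right _ _
  have hε₀ε : ε₀ ≤ ε := min_le_left _ _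
  -- the remainder function
  set h : ℝ → ℂ := fun t => ((V t * t ^ (D - (N:ℝ)) - M : ℝ) : ℂ) with hhdef
  set g : ℝ → ℂ := (Set.Ioo (0:ℝ) δ).indicator h with hgdef
  -- bound near zero
  have hnear : ∀ t : ℝ, 0 < t → t < ε → |V t * t ^ (D - (N:ℝ)) - M| ≤ C * t ^ α := by
    intro t ht htε
    have e1 : t ^ (D - (N:ℝ)) * t ^ ((N:ℝ) - D) = 1 := by
      rw [← Real.rpow_add ht]; norm_num
    have e2 : V t * t ^ (D - (N:ℝ)) - M
        = t ^ (D - (N:ℝ)) * (V t - M * t ^ ((N:ℝ) - D)) := by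
      linear_combination M * e1
    rw [e2, abs_mul, abs_of_nonneg (Real.rpow_nonneg ht.le _)]
    calc t ^ (D - (N:ℝ)) * |V t - M * t ^ ((N:ℝ) - D)|
        ≤ t ^ (D - (N:ℝ)) * (C * t ^ ((N:ℝ) - D + α)) :=
          mul_le_mul_of_nonneg_left (hbound t ht htε) (Real.rpow_nonneg ht.le _)
      _ = C * t ^ α := by
          rw [mul_left_comm, ← Real.rpow_add ht]; ring_nf
  -- global bound
  set B : ℝ := max (ε₀ ^ (D - (N:ℝ))) (δ ^ (D - (N:ℝ))) with hBdef
  have hBt : ∀ t : ℝ, ε₀ ≤ t → t < δ → t ^ (D - (N:ℝ)) ≤ B := by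
    intro t h1 h2
    rcases le_or_gt 0 (D - (N:ℝ)) with hc | hc
    · exact le_trans (Real.rpow_le_rpow (le_trans hε₀.le h1) h2.le hc) (le_max_right _ _)
    · exact le_trans (Real.rpow_le_rpow_of_nonpos hε₀ h1 hc.le) (le_max_left _ _)
  set K : ℝ := max (C * ε₀ ^ α) (V δ * B + M) with hKdef
  have hK : ∀ t ∈ Set.Ioo (0:ℝ) δ, |V t * t ^ (D - (N:ℝ)) - M| ≤ K := by
    rintro t ⟨ht0, htδ⟩
    rcases lt_or_ge t ε₀ with hlt | hge
    · refine le_trans (hnear t ht0 (lt_of_lt_of_le hlt hε₀ε)) (le_trans ?_ (le_max_left _ _))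
      exact mul_le_mul_of_nonneg_left (Real.rpow_le_rpow ht0.le hlt.le hα.le) hC.le
    · refine le_trans (abs_sub _ _) (le_trans ?_ (le_max_right _ _))
      have h1 : |V t * t ^ (D - (N:ℝ))| ≤ V δ * B := by
        rw [abs_of_nonneg (mul_nonneg (hVnn t) (Real.rpow_nonneg ht0.le _))]
        exact mul_le_mul (hVmono htδ.le) (hBt t hge htδ) (Real.rpow_nonneg ht0.le _) (hVnn δ)
      have h2 : |M| = M := abs_of_nonneg hM.le
      linarith
  have hKVt : ∀ t ∈ Set.Ioo (0:ℝ) δ, V t * t ^ (D - (N:ℝ)) ≤ K + M := by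
    intro t ht
    have := (abs_le.mp (hK t ht)).2
    linarith
  -- measurability of h on (0, δ)
  have hrpow_cont : ContinuousOn (fun t : ℝ => t ^ (D - (N:ℝ))) (Set.Ioo (0:ℝ) δ) := by
    intro t ht
    exact (Real.continuousAt_rpow_const t _ (Or.inl ht.1.ne')).continuousWithinAt
  have hh_aesm : AEStronglyMeasurable h (volume.restrict (Set.Ioo (0:ℝ) δ)) := by
    have h1 : AEStronglyMeasurable (fun t : ℝ => V t * t ^ (D - (N:ℝ)) - M)
        (volume.restrict (Set.Ioo (0:ℝ) δ)) :=
      (hVmeas.aestronglyMeasurable.mul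
        (hrpow_cont.aestronglyMeasurable measurableSet_Ioo)).sub aestronglyMeasurable_const
    exact Complex.continuous_ofReal.comp_aestronglyMeasurable h1
  have hh_int : IntegrableOn h (Set.Ioo (0:ℝ) δ) volume := by
    refine ⟨hh_aesm, HasFiniteIntegral.restrict_of_bounded (C := K) measure_Ioo_lt_top ?_⟩
    rw [ae_restrict_iff' measurableSet_Ioo]
    filter_upwards with t ht
    have hnorm : ‖h t‖ = |V t * t ^ (D - (N:ℝ)) - M| := by
      simp only [hhdef, Complex.norm_real, Real.norm_eq_abs]
    rw [hnorm]
    exact hK t ht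
  have hg_int : Integrable g volume := by
    rw [hgdef, integrable_indicator_iff measurableSet_Ioo]; exact hh_int
  have hgl : LocallyIntegrableOn g (Set.Ioi (0:ℝ)) volume :=
    hg_int.locallyIntegrable.locallyIntegrableOn _
  -- big-O at infinity
  have htop : ∀ a : ℝ, g =O[atTop] fun t : ℝ => t ^ (-a : ℝ) := by
    intro a
    have hzero : g =ᶠ[atTop] (fun _ => (0:ℂ)) := by
      filter_upwards [eventually_ge_atTop δ] with t htδ
      exact Set.indicator_of_notMem (fun ht => absurd htδ (not_le.mpr ht.2)) _
    exact hzero.trans_isBigO (Asymptotics.isBigO_zero _ _)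
  -- big-O at zero
  have hbot : g =O[𝓝[>] (0:ℝ)] fun t : ℝ => t ^ (-(-α) : ℝ) := by
    rw [neg_neg]
    apply Asymptotics.IsBigO.of_bound C
    filter_upwards [Ioo_mem_nhdsGT_of_mem (show (0:ℝ) ∈ Set.Ico (0:ℝ) ε₀ from ⟨le_refl _, hε₀⟩)]
      with t ht
    have htδ : t ∈ Set.Ioo (0:ℝ) δ := ⟨ht.1, lt_of_lt_of_le ht.2 hε₀δ⟩
    rw [hgdef, Set.indicator_of_mem htδ]
    have : ‖h t‖ ≤ C * t ^ α := by
      have hnorm : ‖h t‖ = |V t * t ^ (D - (N:ℝ)) - M| := by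
        simp only [hhdef, Complex.norm_real, Real.norm_eq_abs]
      rw [hnorm]
      exact hnear t ht.1 (lt_of_lt_of_le ht.2 hε₀ε)
    calc ‖h t‖ ≤ C * t ^ α := this
      _ ≤ C * ‖t ^ α‖ := by rw [Real.norm_eq_abs, abs_of_nonneg (Real.rpow_nonneg ht.1.le _)]
  -- differentiability of s ↦ mellin g (s - D)
  have hmell : ∀ s : ℂ, D - α < s.re → DifferentiableAt ℂ (fun z => mellin g (z - (D:ℂ))) s := by
    intro s hs
    have h1 : DifferentiableAt ℂ (mellin g) (s - (D:ℂ)) := by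
      apply mellin_differentiableAt_of_isBigO_rpow (a := (s - (D:ℂ)).re + 1) (b := -α)
        hgl (htop _) (lt_add_one _) hbot
      simp only [Complex.sub_re, Complex.ofReal_re]
      linarith
    have h2 : DifferentiableAt ℂ (fun z : ℂ => z - (D:ℂ)) s :=
      differentiableAt_id.sub_const _
    exact DifferentiableAt.comp (𝕜 := ℂ) (g := mellin g)
      (f := fun z : ℂ => z - (D:ℂ)) s h1 h2
  -- the holomorphic extension
  refine ⟨fun s => (M:ℂ) * (δ:ℂ) ^ (s - (D:ℂ)) + (s - (D:ℂ)) * mellin g (s - (D:ℂ)), ?_, ?_, ?_⟩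
  · intro s hs
    apply DifferentiableAt.differentiableWithinAt
    have hδne : ((δ:ℝ):ℂ) ≠ 0 := Complex.ofReal_ne_zero.mpr hδ.ne'
    exact (((differentiableAt_id.sub_const _).const_cpow (Or.inl hδne)).const_mul _).add
      ((differentiableAt_id.sub_const _).mul (hmell s hs))
  · -- identity on Re s > D
    intro s hs
    have hsD : s - (D:ℂ) ≠ 0 := by
      intro h0
      have : (s - (D:ℂ)).re = 0 := by rw [h0]; simp
      simp only [Complex.sub_re, Complex.ofReal_re] at this
      linarith
    -- integrability of the two pieces
    have hI2 : IntegrableOn (fun t : ℝ => (t:ℂ) ^ (s - (D:ℂ) - 1)) (Set.Ioo (0:ℝ) δ) volume := by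
      have hre2 : -1 < (s - (D:ℂ) - 1).re := by
        simp only [Complex.sub_re, Complex.ofReal_re, Complex.one_re]
        linarith
      have := (intervalIntegral.intervalIntegrable_cpow' (a := 0) (b := δ) hre2).1
      exact this.mono_set Set.Ioo_subset_Ioc_self
    have hrpow_int : IntegrableOn (fun t : ℝ => t ^ (s.re - D - 1)) (Set.Ioo (0:ℝ) δ) volume := by
      have := (intervalIntegral.intervalIntegrable_rpow' (a := 0) (b := δ)
        (r := s.re - D - 1) (by linarith : (-1:ℝ) < s.re - D - 1)).1
      exact this.mono_set Set.Ioo_subset_Ioc_self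
    have hre : (s - (N:ℂ) - 1).re = s.re - N - 1 := by
      simp [Complex.sub_re, Complex.natCast_re]
    have hI1 : IntegrableOn (fun t : ℝ => (t:ℂ) ^ (s - (N:ℂ) - 1) * ((V t : ℝ) : ℂ))
        (Set.Ioo (0:ℝ) δ) volume := by
      have hcont : ContinuousOn (fun t : ℝ => (t:ℂ) ^ (s - (N:ℂ) - 1)) (Set.Ioo (0:ℝ) δ) := by
        intro t ht
        exact ((continuousAt_cpow_const
            (Complex.ofReal_mem_slitPlane.mpr ht.1)).comp
          Complex.continuous_ofReal.continuousAt).continuousWithinAt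
      apply Integrable.mono' (hrpow_int.const_mul (K + M))
        ((hcont.aestronglyMeasurable measurableSet_Ioo).mul
          (Complex.continuous_ofReal.comp_aestronglyMeasurable hVmeas.aestronglyMeasurable))
      rw [ae_restrict_iff' measurableSet_Ioo]
      filter_upwards with t ht
      have ht0 := ht.1
      simp only [Pi.mul_apply]
      rw [norm_mul, Complex.norm_cpow_eq_rpow_re_of_pos ht0, hre,
        Complex.norm_real, Real.norm_eq_abs, abs_of_nonneg (hVnn t)]
      have hsplit : t ^ (s.re - (N:ℝ) - 1) = t ^ (s.re - D - 1) * t ^ (D - (N:ℝ)) := by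
        rw [← Real.rpow_add ht0]; ring_nf
      rw [hsplit, mul_assoc]
      rw [mul_comm (K + M) _]
      apply mul_le_mul_of_nonneg_left _ (Real.rpow_nonneg ht0.le _)
      rw [mul_comm]
      exact hKVt t ht
    have hI2' : IntegrableOn (fun t : ℝ => (M:ℂ) * (t:ℂ) ^ (s - (D:ℂ) - 1))
        (Set.Ioo (0:ℝ) δ) volume := hI2.const_mul _
    -- computing the mellin transform
    have hmel : mellin g (s - (D:ℂ)) = ∫ t in Set.Ioo (0:ℝ) δ, (t:ℂ) ^ (s - (D:ℂ) - 1) * h t := by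
      rw [mellin]
      have hcong : ∀ t ∈ Set.Ioi (0:ℝ), (t:ℂ) ^ (s - (D:ℂ) - 1) • g t
          = Set.indicator (Set.Ioo (0:ℝ) δ) (fun t => (t:ℂ) ^ (s - (D:ℂ) - 1) * h t) t := by
        intro t _
        by_cases h' : t ∈ Set.Ioo (0:ℝ) δ
        · rw [hgdef, Set.indicator_of_mem h', Set.indicator_of_mem h', smul_eq_mul]
        · rw [hgdef, Set.indicator_of_notMem h', Set.indicator_of_notMem h', smul_zero]
      rw [setIntegral_congr_fun measurableSet_Ioi hcong, integral_indicator measurableSet_Ioo,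
        Measure.restrict_restrict measurableSet_Ioo,
        Set.inter_eq_self_of_subset_left (fun x hx => hx.1)]
    have hsplit2 : ∀ t ∈ Set.Ioo (0:ℝ) δ, (t:ℂ) ^ (s - (D:ℂ) - 1) * h t
        = (t:ℂ) ^ (s - (N:ℂ) - 1) * ((V t : ℝ) : ℂ) - (M:ℂ) * (t:ℂ) ^ (s - (D:ℂ) - 1) := by
      intro t ht
      have htne : (t:ℂ) ≠ 0 := Complex.ofReal_ne_zero.mpr ht.1.ne'
      have hcast : ((t ^ (D - (N:ℝ)) : ℝ) : ℂ) = (t:ℂ) ^ ((D:ℂ) - (N:ℂ)) := by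
        rw [Complex.ofReal_cpow ht.1.le]; push_cast; ring_nf
      have hpow : (t:ℂ) ^ (s - (D:ℂ) - 1) * (t:ℂ) ^ ((D:ℂ) - (N:ℂ))
          = (t:ℂ) ^ (s - (N:ℂ) - 1) := by
        rw [← Complex.cpow_add _ _ htne]; ring_nf
      have hh : h t = ((V t : ℝ) : ℂ) * (t:ℂ) ^ ((D:ℂ) - (N:ℂ)) - (M:ℂ) := by
        rw [hhdef]; push_cast [hcast]; ring
      rw [hh]
      linear_combination ((V t : ℝ) : ℂ) * hpow
    have hcpowval : (∫ t in Set.Ioo (0:ℝ) δ, (t:ℂ) ^ (s - (D:ℂ) - 1))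
        = (δ:ℂ) ^ (s - (D:ℂ)) / (s - (D:ℂ)) := by
      have hre3 : -1 < (s - (D:ℂ) - 1).re := by
        simp only [Complex.sub_re, Complex.ofReal_re, Complex.one_re]
        linarith
      rw [← integral_Ioc_eq_integral_Ioo, ← intervalIntegral.integral_of_le hδ.le,
        integral_cpow (Or.inl hre3)]
      have he : s - (D:ℂ) - 1 + 1 = s - (D:ℂ) := by ring
      rw [he, Complex.ofReal_zero, Complex.zero_cpow hsD, sub_zero]
    have hfinal : mellin g (s - (D:ℂ))
        = tubeZeta N A δ s - (M:ℂ) * ((δ:ℂ) ^ (s - (D:ℂ)) / (s - (D:ℂ))) := by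
      rw [hmel, setIntegral_congr_fun measurableSet_Ioo hsplit2, integral_sub hI1 hI2',
        MeasureTheory.integral_const_mul, hcpowval]
      rfl
    show (M:ℂ) * (δ:ℂ) ^ (s - (D:ℂ)) + (s - (D:ℂ)) * mellin g (s - (D:ℂ))
        = (s - (D:ℂ)) * tubeZeta N A δ s
    rw [hfinal]
    field_simp
    ring
  · simp
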